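/- For any permutation π of {0,1}^n and the identity ι, (1/2)·∑_x d_H(π(x), ι(x)) ≤ d_{H_n}(π, ι), where d_{H_n} is the distance in the Cayley graph H_n. -/

import Mathlib

/-- The action of a multiple-control Toffoli gate with target line `t` and
polarity pattern `p` on the control lines: flip the target bit iff every
other line matches the pattern. -/
def mcToffoliFun (n : ℕ) (t : Fin n) (p : Fin n → Bool) (x : Fin n → Bool) :
    Fin n → Bool :=
  if ∀ j, j ≠ t → x j = p j then Function.update x t (!(x t)) else x

theorem mcToffoliFun_involutive (n : ℕ) (t : Fin n) (p : Fin n → Bool) :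
    Function.Involutive (mcToffoliFun n t p) := by
  intro x
  unfold mcToffoliFun
  by_cases h : ∀ j, j ≠ t → x j = p j
  · have h2 : ∀ j, j ≠ t → Function.update x t (!(x t)) j = p j := by
      intro j hj
      rw [Function.update_of_ne hj]
      exact h j hj
  
    simp [if_pos h, if_pos h2, Function.update_idem]
  · simp [if_neg h]

/-- A multiple-control Toffoli gate as a permutation of `{0,1}ⁿ`. -/
def mcToffoliPerm (n : ℕ) (t : Fin n) (p : Fin n → Bool) :
    Equiv.Perm (Fin n → Bool) :=
  (mcToffoliFun_involutive n t p).toPerm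

/-- The set of all multiple-control Toffoli gates on `n` lines. -/
def mcToffoliSet (n : ℕ) : Set (Equiv.Perm (Fin n → Bool)) :=
  {σ | ∃ t p, σ = mcToffoliPerm n t p}
/-- The (undirected) Cayley graph of a group `G` with connecting set `C`:
two distinct elements are adjacent iff one is obtained from the other by left
multiplication by a generator. -/
def cayleyGraph {G : Type*} [Group G] (C : Set G) : SimpleGraph G where
  Adj g h := g ≠ h ∧ ∃ c ∈ C, h = c * g ∨ g = c * h
  symm := by
    refine ⟨?_⟩
    rintro g h ⟨hne, c, hc, hch⟩
    exact ⟨hne.symm, c, hc, hch.symm⟩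
  loopless := by
    refine ⟨?_⟩
    rintro g ⟨hne, -⟩
    exact hne rfl

open Equiv Function Finset Subgroup

section Aux

variable {n : ℕ}

private lemma upd_ne (p : Fin n → Bool) (t : Fin n) :
    Function.update p t false ≠ Function.update p t true := by
  intro h
  have := congrFun h t
  simp at this

private lemma mcToffoliPerm_eq_swap (n : ℕ) (t : Fin n) (p : Fin n → Bool) :
    mcToffoliPerm n t p =
      Equiv.swap (Function.update p t false) (Function.update p t true) := by
  refine Equiv.ext fun y => ?_
  show mcToffoliFun n t p y = _
  unfold mcToffoliFun
  by_cases h : ∀ j, j ≠ t → y j = p j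
  · rw [if_pos h]
    have key : ∀ b, Function.update y t b = Function.update p t b := by
      intro b; funext j
      by_cases hj : j = t
      · subst hj; simp
      · rw [Function.update_of_ne hj, Function.update_of_ne hj]; exact h j hj
    have hy : y = Function.update p t (y t) := by
      rw [← key (y t), Function.update_eq_self]
    cases hyt : y t with
    | false =>
      have hy' : y = Function.update p t false := by rw [← hyt]; exact hy
      subst hy'
      simp [Function.update_idem]
    | true =>
      have hy' : y = Function.update p t true := by rw [← hyt]; exact hy
      subst hy'
      simp [Function.update_idem]
  · rw [if_neg h]
    push_neg at h
    obtain ⟨j, hjt, hj⟩ := h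
    have h1 : y ≠ Function.update p t false := by
      intro he; apply hj; rw [he, Function.update_of_ne hjt]
    have h2 : y ≠ Function.update p t true := by
      intro he; apply hj; rw [he, Function.update_of_ne hjt]
    rw [Equiv.swap_apply_of_ne_of_ne h1 h2]

private lemma hd_upd (p : Fin n → Bool) (t : Fin n) :
    hammingDist (Function.update p t false) (Function.update p t true) = 1 := by
  unfold hammingDist
  have : ({i | Function.update p t false i ≠ Function.update p t true i} : Finset (Fin n))
      = {t} := by
    ext j
    by_cases hj : j = t <;>
      simp [hj, Function.update_of_ne, Finset.mem_filter]
  rw [this, card_singleton]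

private lemma gen_inv {c : Equiv.Perm (Fin n → Bool)} (hc : c ∈ mcToffoliSet n) :
    c⁻¹ = c := by
  obtain ⟨t, p, rfl⟩ := hc
  rw [mcToffoliPerm_eq_swap, Equiv.swap_inv]

private lemma gen_sum {c : Equiv.Perm (Fin n → Bool)} (hc : c ∈ mcToffoliSet n) :
    ∑ y : Fin n → Bool, hammingDist (c y) y ≤ 2 := by
  obtain ⟨t, p, rfl⟩ := hc
  rw [mcToffoliPerm_eq_swap]
  set u := Function.update p t false with hu
  set v := Function.update p t true with hv
  have hne : u ≠ v := upd_ne p t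
  have hzero : ∀ y ∈ Finset.univ, y ∉ ({u, v} : Finset (Fin n → Bool)) →
      hammingDist (Equiv.swap u v y) y = 0 := by
    intro y _ hy
    simp only [Finset.mem_insert, Finset.mem_singleton, not_or] at hy
    rw [Equiv.swap_apply_of_ne_of_ne hy.1 hy.2, hammingDist_self]
  have hsub : ({u, v} : Finset (Fin n → Bool)) ⊆ Finset.univ := Finset.subset_univ _
  rw [← Finset.sum_subset hsub hzero, Finset.sum_pair hne, Equiv.swap_apply_left,
    Equiv.swap_apply_right, hammingDist_comm v u, hd_upd]

private lemma swap_mem_of_hd_one {a b : Fin n → Bool} (h : hammingDist a b = 1) :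
    Equiv.swap a b ∈ mcToffoliSet n := by
  obtain ⟨t, ht⟩ := Finset.card_eq_one.mp h
  have htmem : t ∈ ({i | a i ≠ b i} : Finset (Fin n)) := ht ▸ Finset.mem_singleton_self t
  have hat : a t ≠ b t := by simpa using htmem
  have hoff : ∀ j, j ≠ t → a j = b j := by
    intro j hj
    by_contra hne
    have : j ∈ ({i | a i ≠ b i} : Finset (Fin n)) := by simpa using hne
    rw [ht, Finset.mem_singleton] at this
    exact hj this
  have hb : b = Function.update a t (b t) := by
    funext j
    by_cases hj : j = t
    · subst hj; simp
    · rw [Function.update_of_ne hj]; exact (hoff j hj).symm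
  refine ⟨t, a, ?_⟩
  rw [mcToffoliPerm_eq_swap]
  cases hatv : a t with
  | false =>
    have ha : a = Function.update a t false := by rw [← hatv, Function.update_eq_self]
    have hbt : b t = true := by
      cases hbv : b t
      · exact absurd (hatv.trans hbv.symm) hat
      · rfl
    have hb' : b = Function.update a t true := by rw [hb, hbt]
    rw [← ha, ← hb']
  | true =>
    have ha : a = Function.update a t true := by rw [← hatv, Function.update_eq_self]
    have hbt : b t = false := by
      cases hbv : b t
      · rfl
      · exact absurd (hatv.trans hbv.symm) hat
    have hb' : b = Function.update a t false := by rw [hb, hbt]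
    rw [← ha, ← hb', Equiv.swap_comm]

private lemma swap_mem_closure (m : ℕ) :
    ∀ a b : Fin n → Bool, a ≠ b → hammingDist a b ≤ m →
      Equiv.swap a b ∈ Subgroup.closure (mcToffoliSet n) := by
  induction m with
  | zero =>
    intro a b hab hm
    exact absurd (Nat.le_zero.mp hm) (hammingDist_ne_zero.mpr hab)
  | succ m ih =>
    intro a b hab hm
    by_cases h1 : hammingDist a b = 1
    · exact subset_closure (swap_mem_of_hd_one h1)
    · have hpos : 0 < hammingDist a b := hammingDist_pos.mpr hab
      have h2 : 2 ≤ hammingDist a b := by omega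
      have hne : ({i | a i ≠ b i} : Finset (Fin n)).Nonempty := by
        rw [← Finset.card_pos]; exact hpos
      obtain ⟨t, htmem⟩ := hne
      have hat : a t ≠ b t := by simpa using htmem
      set c := Function.update a t (b t) with hc
      have hac : hammingDist a c = 1 := by
        unfold hammingDist
        have : ({i | a i ≠ c i} : Finset (Fin n)) = {t} := by
          ext j
          by_cases hj : j = t
          · subst hj; simp [hc, hat]
          · simp [hc, Function.update_of_ne hj, hj]
        rw [this, card_singleton]
      have hfil : ({i | c i ≠ b i} : Finset (Fin n))
          = ({i | a i ≠ b i} : Finset (Fin n)) \ {t} := by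
        ext j
        by_cases hj : j = t
        · subst hj; simp [hc]
        · simp [hc, Function.update_of_ne hj, hj]
      have hcb : hammingDist c b = hammingDist a b - 1 := by
        unfold hammingDist
        rw [hfil, Finset.card_sdiff_of_subset (by simpa using htmem)]
        simp
      have hcbm : hammingDist c b ≤ m := by omega
      have hcbne : c ≠ b := by
        rw [← hammingDist_ne_zero]; omega
      have hacne : a ≠ c := by
        rw [← hammingDist_ne_zero]; omega
      have hswap : Equiv.swap a b
          = Equiv.swap a c * Equiv.swap c b * (Equiv.swap a c)⁻¹ := by
        have hfc : Equiv.swap a c c = a := Equiv.swap_apply_right a c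
        have hfb : Equiv.swap a c b = b :=
          Equiv.swap_apply_of_ne_of_ne (Ne.symm hab) (Ne.symm hcbne)
        calc Equiv.swap a b = Equiv.swap (Equiv.swap a c c) (Equiv.swap a c b) := by
              rw [hfc, hfb]
          _ = Equiv.swap a c * Equiv.swap c b * (Equiv.swap a c)⁻¹ :=
              Equiv.swap_apply_apply _ _ _
      rw [hswap]
      have h1m : Equiv.swap a c ∈ Subgroup.closure (mcToffoliSet n) :=
        subset_closure (swap_mem_of_hd_one hac)
      exact mul_mem (mul_mem h1m (ih c b hcbne hcbm)) (inv_mem h1m)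

private lemma closure_eq_top :
    Subgroup.closure (mcToffoliSet n) = (⊤ : Subgroup (Equiv.Perm (Fin n → Bool))) := by
  rw [eq_top_iff, ← Equiv.Perm.closure_isSwap]
  rw [Subgroup.closure_le]
  rintro σ ⟨a, b, hab, rfl⟩
  exact swap_mem_closure (hammingDist a b) a b hab le_rfl

private lemma reach_one (π : Equiv.Perm (Fin n → Bool)) :
    (cayleyGraph (mcToffoliSet n)).Reachable π 1 := by
  have hπ : π ∈ Subgroup.closure (mcToffoliSet n) := by
    rw [closure_eq_top]; trivial
  induction hπ using Subgroup.closure_induction_left with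
  | one => exact SimpleGraph.Reachable.refl 1
  | mul_left c hc y hy ih =>
    by_cases h : c * y = y
    · rwa [h]
    · have hadj : (cayleyGraph (mcToffoliSet n)).Adj (c * y) y :=
        ⟨h, c, hc, Or.inr rfl⟩
      exact hadj.reachable.trans ih
  | inv_mul_cancel c hc y hy ih =>
    rw [gen_inv hc]
    by_cases h : c * y = y
    · rwa [h]
    · have hadj : (cayleyGraph (mcToffoliSet n)).Adj (c * y) y :=
        ⟨h, c, hc, Or.inr rfl⟩
      exact hadj.reachable.trans ih

private lemma walk_bound (g h : Equiv.Perm (Fin n → Bool))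
    (w : (cayleyGraph (mcToffoliSet n)).Walk g h) :
    ∑ x : Fin n → Bool, hammingDist (g x) (h x) ≤ 2 * w.length := by
  induction w with
  | nil => simp
  | @cons g v h hadj w ih =>
    obtain ⟨hne, c, hc, hcase⟩ := hadj
    have hg : g = c * v := by
      rcases hcase with h1 | h2
      · rw [h1, ← mul_assoc]
        nth_rewrite 1 [← gen_inv hc]
        rw [inv_mul_cancel, one_mul]
      · exact h2
    have key : ∑ x : Fin n → Bool, hammingDist (g x) (v x) ≤ 2 := by
      calc ∑ x : Fin n → Bool, hammingDist (g x) (v x)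
          = ∑ x : Fin n → Bool, hammingDist (c (v x)) (v x) := by
            rw [hg]; rfl
        _ = ∑ y : Fin n → Bool, hammingDist (c y) y :=
            Equiv.sum_comp v (fun y => hammingDist (c y) y)
        _ ≤ 2 := gen_sum hc
    have tri : ∑ x : Fin n → Bool, hammingDist (g x) (h x)
        ≤ (∑ x : Fin n → Bool, hammingDist (g x) (v x))
          + ∑ x : Fin n → Bool, hammingDist (v x) (h x) := by
      rw [← Finset.sum_add_distrib]
      exact Finset.sum_le_sum fun x _ => hammingDist_triangle _ _ _
    show ∑ x : Fin n → Bool, hammingDist (g x) (h x) ≤ 2 * (w.length + 1)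
    omega

end Aux

/-- Half the total Hamming displacement of a permutation is a lower bound for
its distance to the identity in the Cayley graph `H_n`. -/
theorem displacement_le_cayley_dist (n : ℕ) (π : Equiv.Perm (Fin n → Bool)) :
    ∑ x : Fin n → Bool, hammingDist (π x) x ≤
      2 * (cayleyGraph (mcToffoliSet n)).dist π 1 := by
  obtain ⟨w, hw⟩ := (reach_one π).exists_walk_length_eq_dist
  rw [← hw]
  simpa using walk_bound π 1 w
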